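/- Let N ≥ 1, σ > 0, q > 0, λ ∈ ℝ, and let u : ℝ^N → [0,∞) be measurable. For z ∈ ℝ^N set V̄(z) := ∫_{ℝ^N} u(y)^q/|z−y|^{σ} dy. Fix x ∈ ℝ^N and assume that the functions y ↦ u(y)^q/|x−y|^{σ} and y ↦ u(y)^q/|x_λ−y|^{σ} are integrable on ℝ^N. Then the function y ↦ (|x−y|^{−σ} − |x_λ−y|^{−σ})·(u(y)^q − u(y_λ)^q) is integrable on Σ_λ and V̄(x) − V̄(x_λ) = ∫_{Σ_λ} (|x−y|^{−σ} − |x_λ−y|^{−σ})·(u(y)^q − u(y_λ)^q) dy. -/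

import Mathlib

open MeasureTheory

/-- Reflection of `x` across the hyperplane `T_λ = {x : x₁ = λ}`. -/
def reflect (N : ℕ) (hN : 0 < N) (lam : ℝ) (x : EuclideanSpace ℝ (Fin N)) :
    EuclideanSpace ℝ (Fin N) :=
  WithLp.toLp 2 (fun i => if i = (⟨0, hN⟩ : Fin N) then 2 * lam - x i else x i)

/-- The half-space `Σ_λ = {x : x₁ < λ}`. -/
def halfSpace (N : ℕ) (hN : 0 < N) (lam : ℝ) : Set (EuclideanSpace ℝ (Fin N)) :=
  {x | x ⟨0, hN⟩ < lam}

section Aux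

variable {N : ℕ} (hN : 0 < N) (lam : ℝ)

lemma reflect_reflect (y : EuclideanSpace ℝ (Fin N)) :
    reflect N hN lam (reflect N hN lam y) = y := by
  ext i
  by_cases h : i = (⟨0, hN⟩ : Fin N) <;> simp [reflect, h] <;> ring

lemma norm_reflect_sub_reflect (a b : EuclideanSpace ℝ (Fin N)) :
    ‖reflect N hN lam a - reflect N hN lam b‖ = ‖a - b‖ := by
  rw [EuclideanSpace.norm_eq, EuclideanSpace.norm_eq]
  congr 1
  refine Finset.sum_congr rfl fun i _ => ?_
  have hsub : ∀ c d : EuclideanSpace ℝ (Fin N), (c - d) i = c i - d i := fun _ _ => rfl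
  by_cases h : i = (⟨0, hN⟩ : Fin N) <;>
    simp only [hsub, reflect, PiLp.toLp_apply, h, if_true, if_false, Real.norm_eq_abs, sq_abs] <;> ring

lemma norm_sub_reflect (a b : EuclideanSpace ℝ (Fin N)) :
    ‖a - reflect N hN lam b‖ = ‖reflect N hN lam a - b‖ := by
  conv_lhs => rw [← reflect_reflect hN lam a]
  rw [norm_reflect_sub_reflect]

/-- The negation-of-first-coordinate linear isometry equivalence. -/
noncomputable def negFirst (hN : 0 < N) :
    EuclideanSpace ℝ (Fin N) ≃ₗᵢ[ℝ] EuclideanSpace ℝ (Fin N) :=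
  LinearIsometryEquiv.piLpCongrRight 2
    (fun i => if i = (⟨0, hN⟩ : Fin N) then LinearIsometryEquiv.neg ℝ (E := ℝ)
      else LinearIsometryEquiv.refl ℝ ℝ)

lemma reflect_measurePreserving :
    MeasurePreserving (reflect N hN lam) volume volume := by
  have h1 : MeasurePreserving (negFirst hN) volume volume :=
    (negFirst hN).measurePreserving
  set c : EuclideanSpace ℝ (Fin N) :=
    WithLp.toLp 2 (fun i => if i = (⟨0, hN⟩ : Fin N) then 2 * lam else 0) with hc
  have h2 : MeasurePreserving (fun z : EuclideanSpace ℝ (Fin N) => c + z) volume volume :=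
    measurePreserving_add_left volume c
  have heq : reflect N hN lam = (fun z : EuclideanSpace ℝ (Fin N) => c + z) ∘ (negFirst hN) := by
    funext y
    ext i
    have hadd : ∀ a b : EuclideanSpace ℝ (Fin N), (a + b) i = a i + b i := fun _ _ => rfl
    have hng : (negFirst hN) y i =
        (if i = (⟨0, hN⟩ : Fin N) then LinearIsometryEquiv.neg ℝ (E := ℝ)
          else LinearIsometryEquiv.refl ℝ ℝ) (y i) := by
      simp [negFirst, LinearIsometryEquiv.piLpCongrRight]
    rw [Function.comp_apply, hadd, hng]
    by_cases h : i = (⟨0, hN⟩ : Fin N) <;>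
      simp [reflect, Function.comp, hadd, hng, hc, h] <;> ring
  rw [heq]
  exact h2.comp h1

lemma reflect_measurableEmbedding :
    MeasurableEmbedding (reflect N hN lam) := by
  have hm : Measurable (reflect N hN lam) := (reflect_measurePreserving hN lam).measurable
  exact (MeasurableEquiv.mk
    ⟨reflect N hN lam, reflect N hN lam, reflect_reflect hN lam, reflect_reflect hN lam⟩
    hm hm).measurableEmbedding

lemma halfSpace_measurableSet : MeasurableSet (halfSpace N hN lam) := by
  have : Measurable fun y : EuclideanSpace ℝ (Fin N) => y (⟨0, hN⟩ : Fin N) :=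
    (EuclideanSpace.proj (⟨0, hN⟩ : Fin N)).continuous.measurable
  exact this measurableSet_Iio

lemma hyperplane_null :
    volume ({y : EuclideanSpace ℝ (Fin N) | y (⟨0, hN⟩ : Fin N) = lam}) = 0 := by
  set e := (MeasurableEquiv.toLp 2 (Fin N → ℝ)).symm
  have hmp : MeasurePreserving e.symm volume volume :=
    (EuclideanSpace.volume_preserving_symm_measurableEquiv_toLp (Fin N)).symm
  have hmeas : NullMeasurableSet
      {y : EuclideanSpace ℝ (Fin N) | y (⟨0, hN⟩ : Fin N) = lam} volume := by
    refine (MeasurableSet.nullMeasurableSet ?_)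
    have : Measurable fun y : EuclideanSpace ℝ (Fin N) => y (⟨0, hN⟩ : Fin N) :=
      (EuclideanSpace.proj (⟨0, hN⟩ : Fin N)).continuous.measurable
    exact this (measurableSet_singleton lam)
  have := hmp.measure_preimage hmeas
  rw [← this]
  have hpre : e.symm ⁻¹' {y : EuclideanSpace ℝ (Fin N) | y (⟨0, hN⟩ : Fin N) = lam} =
      {f : Fin N → ℝ | f (⟨0, hN⟩ : Fin N) = lam} := rfl
  rw [hpre, volume_pi]
  exact Measure.pi_hyperplane (fun _ : Fin N => (volume : Measure ℝ)) (⟨0, hN⟩ : Fin N) lam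

end Aux

/-- Lemma 4.1: the difference identity for the convolution
`V̄(z) = ∫ u(y)^q / |z - y|^σ dy` across the moving plane `T_λ`. -/
theorem stmt_6 (N : ℕ) (hN : 0 < N) (σ q lam : ℝ) (hσ : 0 < σ) (hq : 0 < q)
    (u : EuclideanSpace ℝ (Fin N) → ℝ) (hum : Measurable u) (hu0 : ∀ y, 0 ≤ u y)
    (x : EuclideanSpace ℝ (Fin N))
    (hint1 : Integrable (fun y => u y ^ q / ‖x - y‖ ^ σ))
    (hint2 : Integrable (fun y => u y ^ q / ‖reflect N hN lam x - y‖ ^ σ)) :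
    IntegrableOn
        (fun y => (1 / ‖x - y‖ ^ σ - 1 / ‖reflect N hN lam x - y‖ ^ σ) *
          (u y ^ q - u (reflect N hN lam y) ^ q)) (halfSpace N hN lam) ∧
      (∫ y, u y ^ q / ‖x - y‖ ^ σ) - (∫ y, u y ^ q / ‖reflect N hN lam x - y‖ ^ σ) =
        ∫ y in halfSpace N hN lam,
          (1 / ‖x - y‖ ^ σ - 1 / ‖reflect N hN lam x - y‖ ^ σ) *
            (u y ^ q - u (reflect N hN lam y) ^ q) := by
  set R := reflect N hN lam with hRdef
  set S := halfSpace N hN lam with hSdef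
  have hRR : ∀ y, R (R y) = y := reflect_reflect hN lam
  have hmp : MeasurePreserving R volume volume := reflect_measurePreserving hN lam
  have hemb : MeasurableEmbedding R := reflect_measurableEmbedding hN lam
  have hSm : MeasurableSet S := halfSpace_measurableSet hN lam
  -- complement of S is a.e. equal to `R ⁻¹' S`
  have hpre : R ⁻¹' S = {y : EuclideanSpace ℝ (Fin N) | lam < y (⟨0, hN⟩ : Fin N)} := by
    ext y
    simp only [Set.mem_preimage, hSdef, halfSpace, Set.mem_setOf_eq, hRdef, reflect, PiLp.toLp_apply, if_true]
    constructor <;> intro h <;> linarith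
  have hae : Sᶜ =ᵐ[(volume : Measure (EuclideanSpace ℝ (Fin N)))] R ⁻¹' S := by
    rw [hpre]
    have h1 : Sᶜ \ {y : EuclideanSpace ℝ (Fin N) | lam < y (⟨0, hN⟩ : Fin N)} ⊆
        {y : EuclideanSpace ℝ (Fin N) | y (⟨0, hN⟩ : Fin N) = lam} := by
      intro y hy
      simp only [Set.mem_diff, Set.mem_compl_iff, hSdef, halfSpace, Set.mem_setOf_eq] at hy ⊢
      linarith [not_lt.1 hy.1, not_lt.1 hy.2]
    have h2 : {y : EuclideanSpace ℝ (Fin N) | lam < y (⟨0, hN⟩ : Fin N)} \ Sᶜ ⊆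
        (∅ : Set (EuclideanSpace ℝ (Fin N))) := by
      intro y hy
      simp only [Set.mem_diff, Set.mem_compl_iff, not_not, hSdef, halfSpace,
        Set.mem_setOf_eq] at hy
      exact absurd hy.2 (by linarith [hy.1])
    refine (ae_eq_set.2 ⟨?_, ?_⟩)
    · exact measure_mono_null h1 (hyperplane_null hN lam)
    · exact measure_mono_null h2 (by simp)
  -- key identity: for any integrable g, ∫ g = ∫_S g + ∫_S g ∘ R
  have key : ∀ g : EuclideanSpace ℝ (Fin N) → ℝ, Integrable g →
      (∫ y, g y) = (∫ y in S, g y) + ∫ y in S, g (R y) := by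
    intro g hg
    have h1 : (∫ y in S, g y) + (∫ y in Sᶜ, g y) = ∫ y, g y :=
      integral_add_compl hSm hg
    have h2 : (∫ y in Sᶜ, g y) = ∫ y in R ⁻¹' S, g y :=
      setIntegral_congr_set hae
    have h3 : (∫ y in R ⁻¹' S, g y) = ∫ y in S, g (R y) := by
      have h := hmp.setIntegral_preimage_emb hemb (fun z => g (R z)) S
      simp only [hRR] at h
      exact h
    linarith [h1, h2 ▸ h3]
  -- the four pieces
  set g1 : EuclideanSpace ℝ (Fin N) → ℝ := fun y => u y ^ q / ‖x - y‖ ^ σ with hg1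
  set g2 : EuclideanSpace ℝ (Fin N) → ℝ := fun y => u y ^ q / ‖R x - y‖ ^ σ with hg2
  have hg1R : (fun y => g1 (R y)) = fun y => u (R y) ^ q / ‖R x - y‖ ^ σ := by
    funext y
    simp only [hg1]
    rw [norm_sub_reflect hN lam x y]
  have hg2R : (fun y => g2 (R y)) = fun y => u (R y) ^ q / ‖x - y‖ ^ σ := by
    funext y
    simp only [hg2]
    rw [norm_sub_reflect hN lam (R x) y, show reflect N hN lam (R x) = R (R x) from rfl, hRR]
  have hig1 : Integrable g1 := hint1
  have hig2 : Integrable g2 := hint2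
  have hig1R : Integrable fun y => g1 (R y) :=
    (hmp.integrable_comp_emb hemb).2 hig1
  have hig2R : Integrable fun y => g2 (R y) :=
    (hmp.integrable_comp_emb hemb).2 hig2
  -- pointwise identity for the integrand
  have hFeq : (fun y => (1 / ‖x - y‖ ^ σ - 1 / ‖R x - y‖ ^ σ) *
      (u y ^ q - u (R y) ^ q)) =
      fun y => (g1 y + g1 (R y)) - (g2 y + g2 (R y)) := by
    funext y
    have e1 : g1 (R y) = u (R y) ^ q / ‖R x - y‖ ^ σ := congrFun hg1R y
    have e2 : g2 (R y) = u (R y) ^ q / ‖x - y‖ ^ σ := congrFun hg2R y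
    rw [e1, e2]
    simp only [hg1, hg2]
    ring
  have hadd1 : IntegrableOn (fun y => g1 y + g1 (R y)) S :=
    hig1.integrableOn.add hig1R.integrableOn
  have hadd2 : IntegrableOn (fun y => g2 y + g2 (R y)) S :=
    hig2.integrableOn.add hig2R.integrableOn
  have hIF : IntegrableOn
      (fun y => (1 / ‖x - y‖ ^ σ - 1 / ‖R x - y‖ ^ σ) * (u y ^ q - u (R y) ^ q)) S := by
    rw [hFeq]
    exact hadd1.sub hadd2
  refine ⟨hIF, ?_⟩
  have hk1 := key g1 hig1
  have hk2 := key g2 hig2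
  have hsplit : (∫ y in S, (1 / ‖x - y‖ ^ σ - 1 / ‖R x - y‖ ^ σ) *
      (u y ^ q - u (R y) ^ q)) =
      ((∫ y in S, g1 y) + ∫ y in S, g1 (R y)) -
        ((∫ y in S, g2 y) + ∫ y in S, g2 (R y)) := by
    rw [hFeq, integral_sub hadd1 hadd2,
      integral_add hig1.integrableOn hig1R.integrableOn,
      integral_add hig2.integrableOn hig2R.integrableOn]
  rw [hsplit]
  simp only [hg1, hg2] at hk1 hk2 ⊢
  linarith [hk1, hk2]
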